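/- arXiv:2302.04086 — 2 statements merged into one kernel-verified Lean document; each statement's English description precedes it below -/
import Mathlib

section
/- Let T₁,…,T_m be real n₁×n₂ matrices, μ a unit pure quaternion, and ω = exp(−2πμ/m). Then (F_μ ⊗ I_{n₁})·bcirc(T)·(F_μᴴ ⊗ I_{n₂}) = Bdiag(D₁,…,D_m), a block diagonal matrix whose blocks are D_{s+1} = Σ_{p=0}^{m−1} ω^{sp} T_{p+1} for s = 0,…,m−1; equivalently, its scalar entry at row (s,i), column (t,j) is 0 when s ≠ t and equals Σ_{p=0}^{m−1} ω^{sp} (T_{p+1})_{ij} when s = t. -/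
open Quaternion Matrix Kronecker

/-- `ω = exp(−2πμ/m)`, the quaternion exponential of `(−2π/m)·μ`. -/
noncomputable def qomega (m : ℕ) (μ : ℍ[ℝ]) : ℍ[ℝ] :=
  NormedSpace.exp ((-(2 * Real.pi) / m : ℝ) • μ)

/-- The `m×m` discrete quaternion Fourier transform matrix,
`(F_μ)_{uv} = (1/√m)·ω^{uv}`. -/
noncomputable def qdft (m : ℕ) (μ : ℍ[ℝ]) : Matrix (Fin m) (Fin m) ℍ[ℝ] :=
  Matrix.of fun u v => ((Real.sqrt m)⁻¹ : ℝ) • (qomega m μ) ^ ((u : ℕ) * (v : ℕ))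

/-- The block circulant matrix of the frontal slices `T₁, …, T_m`: its `(s,t)` block
(0-indexed) is `T_{((s−t) mod m)+1}`. -/
noncomputable def bcirc {m n₁ n₂ : ℕ} (T : Fin m → Matrix (Fin n₁) (Fin n₂) ℍ[ℝ]) :
    Matrix (Fin m × Fin n₁) (Fin m × Fin n₂) ℍ[ℝ] :=
  Matrix.of fun p q => T (p.1 - q.1) p.2 q.2

/-! ### Auxiliary complex-number lemmas -/

/-- The complex primitive root `ζ = exp(−2πi/m)`. -/
noncomputable def zetAux (m : ℕ) : ℂ :=
  Complex.exp (((-(2 * Real.pi) / m : ℝ) : ℂ) * Complex.I)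

lemma zetAux_eq_inv (m : ℕ) :
    zetAux m = (Complex.exp (2 * Real.pi * Complex.I / m))⁻¹ := by
  rw [zetAux, ← Complex.exp_neg]
  congr 1
  push_cast
  ring

lemma zetAux_prim (m : ℕ) (hm : 1 ≤ m) : IsPrimitiveRoot (zetAux m) m := by
  rw [zetAux_eq_inv]
  exact (Complex.isPrimitiveRoot_exp m (by omega)).inv

lemma zetAux_pow_m (m : ℕ) (hm : 1 ≤ m) : zetAux m ^ m = 1 :=
  (zetAux_prim m hm).pow_eq_one

lemma zetAux_mul_conj (m : ℕ) : zetAux m * (starRingEnd ℂ) (zetAux m) = 1 := by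
  rw [zetAux, ← Complex.exp_conj, ← Complex.exp_add]
  rw [_root_.map_mul, Complex.conj_I, Complex.conj_ofReal]
  rw [show ((-(2 * Real.pi) / m : ℝ) : ℂ) * Complex.I +
      ((-(2 * Real.pi) / m : ℝ) : ℂ) * (-Complex.I) = 0 by ring]
  exact Complex.exp_zero

lemma pow_mod_of_pow_eq_one' {M : Type*} [Monoid M] {w : M} {m : ℕ} (h : w ^ m = 1) (x : ℕ) :
    w ^ (x % m) = w ^ x := by
  conv_rhs => rw [← Nat.div_add_mod x m, pow_add, pow_mul, h, one_pow, one_mul]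

lemma zetAux_sum (m : ℕ) (hm : 1 ≤ m) (s t : Fin m) :
    ∑ v : Fin m, zetAux m ^ ((s : ℕ) * (v : ℕ)) *
        (starRingEnd ℂ) (zetAux m) ^ ((t : ℕ) * (v : ℕ))
      = if s = t then (m : ℂ) else 0 := by
  set ζ := zetAux m
  have hζm : ζ ^ m = 1 := zetAux_pow_m m hm
  have hζ0 : ζ ≠ 0 := Complex.exp_ne_zero _
  have hconj : (starRingEnd ℂ) ζ = ζ⁻¹ := by
    field_simp
    rw [mul_comm]; exact zetAux_mul_conj m
  set w := ζ ^ (s : ℕ) * (starRingEnd ℂ) ζ ^ (t : ℕ) with hw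
  have hterm : ∀ v : Fin m,
      ζ ^ ((s : ℕ) * (v : ℕ)) * (starRingEnd ℂ) ζ ^ ((t : ℕ) * (v : ℕ)) = w ^ (v : ℕ) := by
    intro v
    rw [hw, mul_pow, ← pow_mul, ← pow_mul]
  have hw1 : w = 1 ↔ s = t := by
    rw [hw, hconj, inv_pow, mul_inv_eq_one₀ (pow_ne_zero _ hζ0)]
    exact ⟨fun h => Fin.ext ((zetAux_prim m hm).pow_inj s.isLt t.isLt h), fun h => by rw [h]⟩
  rw [Finset.sum_congr rfl fun v _ => hterm v, Fin.sum_univ_eq_sum_range (fun i => w ^ i)]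
  by_cases h : s = t
  · simp [hw1.mpr h, h]
  · rw [if_neg h]
    have hwne : w ≠ 1 := fun hh => h (hw1.mp hh)
    have hwm : w ^ m = 1 := by
      rw [hw, mul_pow, ← pow_mul, ← pow_mul, mul_comm (s : ℕ) m, mul_comm (t : ℕ) m, pow_mul,
        pow_mul, hζm, ← map_pow, hζm]
      simp
    rw [geom_sum_eq hwne, hwm, sub_self, zero_div]

lemma zetAux_key_sum (m : ℕ) (hm : 1 ≤ m) (a : Fin m → ℝ) (s t : Fin m) :
    haveI : NeZero m := ⟨by omega⟩
    ∑ v : Fin m, ∑ u : Fin m,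
        zetAux m ^ ((s : ℕ) * (u : ℕ)) * (a (u - v) : ℂ) *
          (starRingEnd ℂ) (zetAux m) ^ ((t : ℕ) * (v : ℕ))
      = if s = t then (m : ℂ) * ∑ k : Fin m, zetAux m ^ ((s : ℕ) * (k : ℕ)) * (a k : ℂ)
        else 0 := by
  haveI : NeZero m := ⟨by omega⟩
  set ζ := zetAux m with hζ
  have hζm : ζ ^ m = 1 := zetAux_pow_m m hm
  have hreidx : ∀ v : Fin m, ∀ f : Fin m → ℂ, ∑ u : Fin m, f u = ∑ p : Fin m, f (p + v) :=
    fun v f => (Fintype.sum_equiv (Equiv.addRight v) _ _ (fun p => rfl)).symm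
  have hsplit : ∀ (p v : Fin m),
      ζ ^ ((s : ℕ) * ((p + v : Fin m) : ℕ))
        = ζ ^ ((s : ℕ) * (p : ℕ)) * ζ ^ ((s : ℕ) * (v : ℕ)) := by
    intro p v
    have h1 : ((p + v : Fin m) : ℕ) = ((p : ℕ) + (v : ℕ)) % m := by
      simp [Fin.add_def]
    rw [h1, mul_comm (s : ℕ), pow_mul, pow_mod_of_pow_eq_one' hζm, ← pow_mul,
      mul_comm _ (s : ℕ), mul_add, pow_add]
  calc ∑ v : Fin m, ∑ u : Fin m,
        ζ ^ ((s : ℕ) * (u : ℕ)) * (a (u - v) : ℂ) * (starRingEnd ℂ) ζ ^ ((t : ℕ) * (v : ℕ))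
      = ∑ v : Fin m, ∑ p : Fin m,
        (ζ ^ ((s : ℕ) * (p : ℕ)) * (a p : ℂ)) *
          (ζ ^ ((s : ℕ) * (v : ℕ)) * (starRingEnd ℂ) ζ ^ ((t : ℕ) * (v : ℕ))) := by
        refine Finset.sum_congr rfl fun v _ => ?_
        rw [hreidx v]
        refine Finset.sum_congr rfl fun p _ => ?_
        rw [add_sub_cancel_right, hsplit p v]
        ring
    _ = (∑ p : Fin m, ζ ^ ((s : ℕ) * (p : ℕ)) * (a p : ℂ)) *
          (∑ v : Fin m, ζ ^ ((s : ℕ) * (v : ℕ)) * (starRingEnd ℂ) ζ ^ ((t : ℕ) * (v : ℕ))) := by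
        rw [Finset.sum_comm, Finset.sum_mul]
        exact Finset.sum_congr rfl fun p _ => (Finset.mul_sum _ _ _).symm
    _ = _ := by
        rw [zetAux_sum m hm s t]
        by_cases h : s = t <;> simp [h, mul_comm]

/-- for real frontal slices `T₁,…,T_m`, a unit pure quaternion `μ` and
`ω = exp(−2πμ/m)`, `(F_μ ⊗ I)·bcirc(T)·(F_μᴴ ⊗ I)` is block diagonal with blocks
`D_{s+1} = Σ_{p} ω^{sp} T_{p+1}`: its scalar entry at row `(s,i)`, column `(t,j)` is `0`
when `s ≠ t` and equals `Σ_{p} ω^{sp} (T_{p+1})_{ij}` when `s = t`. -/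
theorem qdft_block_diagonalizes_real_bcirc (m n₁ n₂ : ℕ) (hm : 1 ≤ m) (μ : ℍ[ℝ])
    (hpure : μ.re = 0) (hunit : ‖μ‖ = 1) (T : Fin m → Matrix (Fin n₁) (Fin n₂) ℝ) :
    (qdft m μ ⊗ₖ (1 : Matrix (Fin n₁) (Fin n₁) ℍ[ℝ]))
        * bcirc (fun t => (T t).map fun x => ((x : ℝ) : ℍ[ℝ]))
        * ((qdft m μ)ᴴ ⊗ₖ (1 : Matrix (Fin n₂) (Fin n₂) ℍ[ℝ])) =
      Matrix.of fun p q =>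
        if p.1 = q.1 then
          ∑ k : Fin m, (qomega m μ) ^ ((p.1 : ℕ) * (k : ℕ)) * ((T k p.2 q.2 : ℝ) : ℍ[ℝ])
        else 0 := by
  haveI : NeZero m := ⟨by omega⟩
  -- the embedding of ℂ into ℍ sending I to μ
  have hμ2 : μ * μ = -1 := by
    have hstar : star μ = -μ := Quaternion.star_eq_neg.mpr hpure
    have h1 : μ * star μ = 1 := by
      rw [Quaternion.self_mul_star, Quaternion.normSq_eq_norm_mul_self, hunit]
      norm_num
    rw [hstar, mul_neg] at h1
    rw [← neg_neg (μ * μ), h1]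
  set φ : ℂ →ₐ[ℝ] ℍ[ℝ] := Complex.liftAux μ hμ2 with hφdef
  have hcont : Continuous φ := φ.toLinearMap.continuous_of_finiteDimensional
  have hφstar : ∀ z : ℂ, star (φ z) = φ ((starRingEnd ℂ) z) := by
    intro z
    have hstar : star μ = -μ := Quaternion.star_eq_neg.mpr hpure
    simp [hφdef, Complex.liftAux_apply, StarModule.star_smul, hstar,
      Quaternion.algebraMap_def, sub_eq_add_neg]
  have hφreal : ∀ r : ℝ, φ ((r : ℂ)) = (r : ℍ[ℝ]) := by
    intro r
    simp [hφdef, Complex.liftAux_apply, Quaternion.algebraMap_def]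
  set ζ := zetAux m with hζdef
  have hω : qomega m μ = φ ζ := by
    have h1 : ζ = NormedSpace.exp (((-(2 * Real.pi) / m : ℝ) : ℂ) * Complex.I) := by
      rw [hζdef, zetAux, Complex.exp_eq_exp_ℂ]
    rw [h1, NormedSpace.map_exp φ hcont]
    rw [show ((-(2 * Real.pi) / m : ℝ) : ℂ) * Complex.I
        = (-(2 * Real.pi) / m : ℝ) • Complex.I by rw [Complex.real_smul]]
    rw [_root_.map_smul, hφdef, Complex.liftAux_apply_I]
    rfl
  apply Matrix.ext
  rintro ⟨s, i⟩ ⟨t, j⟩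
  simp only [Matrix.mul_apply, qdft, bcirc, kroneckerMap_apply, Matrix.of_apply,
    conjTranspose_apply, Matrix.one_apply, Matrix.map_apply, Fintype.sum_prod_type,
    mul_ite, ite_mul, mul_zero, zero_mul, mul_one, one_mul,
    Finset.sum_ite_eq, Finset.sum_ite_eq', Finset.mem_univ, if_true]
  -- now a scalar identity in ℍ
  have hsqrt : ((Real.sqrt m)⁻¹ : ℝ) * (Real.sqrt m)⁻¹ = (m : ℝ)⁻¹ := by
    rw [← mul_inv, Real.mul_self_sqrt (by positivity)]
  have hterm : ∀ u v : Fin m,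
      ((Real.sqrt m)⁻¹ : ℝ) • qomega m μ ^ ((s : ℕ) * (u : ℕ)) * ((T (u - v) i j : ℝ) : ℍ[ℝ])
          * star (((Real.sqrt m)⁻¹ : ℝ) • qomega m μ ^ ((t : ℕ) * (v : ℕ)))
        = (m : ℝ)⁻¹ • φ (ζ ^ ((s : ℕ) * (u : ℕ)) * ((T (u - v) i j : ℝ) : ℂ)
            * (starRingEnd ℂ) ζ ^ ((t : ℕ) * (v : ℕ))) := by
    intro u v
    have h3 : star ((φ ζ) ^ ((t : ℕ) * (v : ℕ)))
        = φ ((starRingEnd ℂ) ζ ^ ((t : ℕ) * (v : ℕ))) := by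
      rw [← map_pow, hφstar, map_pow]
    rw [Quaternion.star_smul, hω, h3, ← hφreal (T (u - v) i j), ← map_pow φ,
      _root_.map_mul φ _ ((starRingEnd ℂ) ζ ^ ((t : ℕ) * (v : ℕ))),
      _root_.map_mul φ (ζ ^ ((s : ℕ) * (u : ℕ)))]
    rw [smul_mul_assoc, smul_mul_assoc, mul_smul_comm, smul_smul, hsqrt]
  calc ∑ v : Fin m,
        (∑ u : Fin m, ((Real.sqrt m)⁻¹ : ℝ) • qomega m μ ^ ((s : ℕ) * (u : ℕ))
            * ((T (u - v) i j : ℝ) : ℍ[ℝ]))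
          * star (((Real.sqrt m)⁻¹ : ℝ) • qomega m μ ^ ((t : ℕ) * (v : ℕ)))
      = ∑ v : Fin m, ∑ u : Fin m, (m : ℝ)⁻¹ •
          φ (ζ ^ ((s : ℕ) * (u : ℕ)) * ((T (u - v) i j : ℝ) : ℂ)
            * (starRingEnd ℂ) ζ ^ ((t : ℕ) * (v : ℕ))) := by
        refine Finset.sum_congr rfl fun v _ => ?_
        rw [Finset.sum_mul]
        exact Finset.sum_congr rfl fun u _ => hterm u v
    _ = (m : ℝ)⁻¹ • φ (∑ v : Fin m, ∑ u : Fin m,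
          ζ ^ ((s : ℕ) * (u : ℕ)) * ((T (u - v) i j : ℝ) : ℂ)
            * (starRingEnd ℂ) ζ ^ ((t : ℕ) * (v : ℕ))) := by
        rw [map_sum, Finset.smul_sum]
        refine Finset.sum_congr rfl fun v _ => ?_
        rw [map_sum, Finset.smul_sum]
    _ = _ := by
        rw [zetAux_key_sum m hm (fun p => T p i j) s t]
        by_cases h : s = t
        · rw [if_pos h, if_pos h]
          rw [show ((m : ℂ)) = ((m : ℝ) : ℂ) by push_cast; ring]
          rw [← Complex.real_smul, _root_.map_smul, smul_smul,
            inv_mul_cancel₀ (by positivity : (m : ℝ) ≠ 0), one_smul, map_sum]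
          refine Finset.sum_congr rfl fun k _ => ?_
          rw [_root_.map_mul, map_pow, hφreal, hω]
        · rw [if_neg h, if_neg h, map_zero, smul_zero]
end

section
/- Let (μ, α, β) be a three-axis system, let T⁽⁰⁾, T⁽¹⁾, T⁽²⁾, T⁽³⁾ each be a family of m real n₁×n₂ matrices, and let T have frontal slices T_t = T⁽⁰⁾_t + T⁽¹⁾_t μ + T⁽²⁾_t α + T⁽³⁾_t β. With ω = exp(−2πμ/m), (F_μ ⊗ I_{n₁})·bcirc(T)·(F_μᴴ ⊗ I_{n₂}) = Bdiag(D⁽⁰⁾) + Bdiag(D⁽¹⁾)μ + Bdiag(D⁽²⁾)Zα + Bdiag(D⁽³⁾)Zβ, where for each l the block D⁽ˡ⁾_{s+1} = Σ_{p=0}^{m−1} ω^{sp} T⁽ˡ⁾_{p+1}, Z = A ⊗ I_{n₂} with A the m×m flip permutation matrix, and the quaternion scalars μ, α, β multiply on the right. -/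
open Quaternion Matrix Kronecker

/-- The dot product of two quaternions. -/
noncomputable def dotQ (a b : ℍ[ℝ]) : ℝ :=
  a.re * b.re + a.imI * b.imI + a.imJ * b.imJ + a.imK * b.imK

/-- A three-axis system `(μ, α, β)`. -/
structure ThreeAxis (μ α β : ℍ[ℝ]) : Prop where
  μ_pure : μ.re = 0
  μ_unit : ‖μ‖ = 1
  α_pure : α.re = 0
  α_unit : ‖α‖ = 1
  orth : dotQ μ α = 0
  β_eq : β = μ * α

/-- The `m×m` flip permutation matrix `A`, with `A_{st} = 1` iff `s + t ≡ 0 (mod m)`. -/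
noncomputable def flipMat (m : ℕ) : Matrix (Fin m) (Fin m) ℍ[ℝ] :=
  Matrix.of fun s t => if ((s : ℕ) + (t : ℕ)) % m = 0 then 1 else 0

/-- Right multiplication of every entry of a matrix by a quaternion scalar. -/
noncomputable def mulRight {I J : Type*} (M : Matrix I J ℍ[ℝ]) (q : ℍ[ℝ]) :
    Matrix I J ℍ[ℝ] :=
  Matrix.of fun i j => M i j * q

/-- `Bdiag(D⁽ˡ⁾)`: the block diagonal matrix whose `s`-th diagonal block is
`D⁽ˡ⁾_{s+1} = Σ_{p=0}^{m−1} ω^{sp} T⁽ˡ⁾_{p+1}` for real slices `T⁽ˡ⁾`. -/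
noncomputable def bdiagD {m n₁ n₂ : ℕ} (μ : ℍ[ℝ]) (T : Fin m → Matrix (Fin n₁) (Fin n₂) ℝ) :
    Matrix (Fin m × Fin n₁) (Fin m × Fin n₂) ℍ[ℝ] :=
  Matrix.of fun p q =>
    if p.1 = q.1 then
      ∑ k : Fin m, (qomega m μ) ^ ((p.1 : ℕ) * (k : ℕ)) * ((T k p.2 q.2 : ℝ) : ℍ[ℝ])
    else 0

/-! ### Auxiliary machinery -/

lemma qcoe_eq_smul (r : ℝ) : (r : ℍ[ℝ]) = r • (1 : ℍ[ℝ]) := by ext <;> simp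

noncomputable def qphi (μ : ℍ[ℝ]) (z : ℂ) : ℍ[ℝ] := (z.re : ℍ[ℝ]) + z.im • μ

lemma qphi_mul (μ : ℍ[ℝ]) (hμ : μ * μ = -1) (z w : ℂ) :
    qphi μ (z * w) = qphi μ z * qphi μ w := by
  simp only [qphi, Complex.mul_re, Complex.mul_im, qcoe_eq_smul]
  simp only [add_mul, mul_add, smul_mul_smul_comm, one_mul, mul_one, hμ, smul_neg]
  module

lemma qphi_add (μ : ℍ[ℝ]) (z w : ℂ) : qphi μ (z + w) = qphi μ z + qphi μ w := by
  simp only [qphi, Complex.add_re, Complex.add_im, qcoe_eq_smul]; module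

lemma qphi_one (μ : ℍ[ℝ]) : qphi μ 1 = 1 := by simp [qphi]

lemma qphi_I (μ : ℍ[ℝ]) : qphi μ Complex.I = μ := by simp [qphi]

lemma qphi_ofReal (μ : ℍ[ℝ]) (a : ℝ) : qphi μ (a : ℂ) = (a : ℍ[ℝ]) := by simp [qphi]

lemma qphi_zero (μ : ℍ[ℝ]) : qphi μ 0 = 0 := by simp [qphi]

lemma qphi_pow (μ : ℍ[ℝ]) (hμ : μ * μ = -1) (z : ℂ) (n : ℕ) :
    qphi μ (z ^ n) = qphi μ z ^ n := by
  induction n with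
  | zero => simp [qphi_one]
  | succ n ih => rw [pow_succ, pow_succ, qphi_mul μ hμ, ih]

noncomputable def qphiHom (μ : ℍ[ℝ]) (hμ : μ * μ = -1) : ℂ →ₐ[ℝ] ℍ[ℝ] where
  toFun := qphi μ
  map_one' := qphi_one μ
  map_mul' := qphi_mul μ hμ
  map_zero' := qphi_zero μ
  map_add' := qphi_add μ
  commutes' r := by simpa using qphi_ofReal μ r

lemma qphiHom_cont (μ : ℍ[ℝ]) (hμ : μ * μ = -1) : Continuous (qphiHom μ hμ) := by
  show Continuous (qphi μ)
  unfold qphi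
  exact (Quaternion.continuous_coe.comp Complex.continuous_re).add
    (Complex.continuous_im.smul continuous_const)

noncomputable def zeta (m : ℕ) : ℂ := Complex.exp ((-(2 * Real.pi) / m : ℝ) * Complex.I)

lemma qomega_eq (m : ℕ) (μ : ℍ[ℝ]) (hμ : μ * μ = -1) :
    qomega m μ = qphi μ (zeta m) := by
  have h1 : ((-(2 * Real.pi) / m : ℝ) • μ)
      = qphiHom μ hμ ((-(2 * Real.pi) / m : ℝ) • Complex.I) := by
    rw [_root_.map_smul]
    show _ = _ • qphi μ Complex.I
    simp [qphi]
  rw [qomega, h1, ← NormedSpace.map_exp (qphiHom μ hμ) (qphiHom_cont μ hμ)]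
  rw [← Complex.exp_eq_exp_ℂ]
  show qphi μ _ = _
  rw [zeta]
  norm_num [Complex.real_smul]

lemma qphi_star (μ : ℍ[ℝ]) (hre : μ.re = 0) (z : ℂ) :
    star (qphi μ z) = qphi μ (starRingEnd ℂ z) := by
  ext <;> simp [qphi, hre]

lemma alpha_qphi (μ α : ℍ[ℝ]) (hanti : α * μ = -(μ * α)) (z : ℂ) :
    α * qphi μ z = qphi μ (starRingEnd ℂ z) * α := by
  simp only [qphi, mul_add, add_mul, mul_smul_comm, smul_mul_assoc, hanti,
    Complex.conj_re, Complex.conj_im, Quaternion.coe_mul_eq_smul, Quaternion.mul_coe_eq_smul]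
  module

lemma mu_sq (μ : ℍ[ℝ]) (hre : μ.re = 0) (hn : ‖μ‖ = 1) : μ * μ = -1 := by
  have h2 : μ.re ^ 2 + μ.imI ^ 2 + μ.imJ ^ 2 + μ.imK ^ 2 = 1 := by
    have h1 : Quaternion.normSq μ = 1 := by
      have := Quaternion.normSq_eq_norm_mul_self μ
      rw [hn] at this; simpa using this
    linarith [Quaternion.normSq_def' μ, h1]
  ext <;> simp [Quaternion.re_mul, Quaternion.imI_mul, Quaternion.imJ_mul,
    Quaternion.imK_mul, hre] <;> nlinarith [h2]

lemma anti_comm (μ α : ℍ[ℝ]) (hμ : μ.re = 0) (hα : α.re = 0) (hd : dotQ μ α = 0) :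
    α * μ = -(μ * α) := by
  rw [dotQ, hμ, hα] at hd
  ext <;> simp [Quaternion.re_mul, Quaternion.imI_mul, Quaternion.imJ_mul,
    Quaternion.imK_mul, hμ, hα] <;> nlinarith [hd]

lemma zeta_pow_m (m : ℕ) (hm : 1 ≤ m) : zeta m ^ m = 1 := by
  rw [zeta, ← Complex.exp_nat_mul]
  have hm0 : (m : ℂ) ≠ 0 := Nat.cast_ne_zero.mpr (by omega)
  have : (m : ℂ) * ((-(2 * Real.pi) / m : ℝ) * Complex.I)
      = ((-1 : ℤ) : ℂ) * (2 * Real.pi * Complex.I) := by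
    push_cast
    field_simp
  rw [this, Complex.exp_int_mul_two_pi_mul_I]

lemma zeta_pow_eq_one_iff (m : ℕ) (hm : 1 ≤ m) (c : ℕ) : zeta m ^ c = 1 ↔ m ∣ c := by
  constructor
  · intro hc
    rw [zeta, ← Complex.exp_nat_mul, Complex.exp_eq_one_iff] at hc
    obtain ⟨n, hn⟩ := hc
    have hre := congrArg Complex.im hn
    simp [Complex.mul_im] at hre
    have hm0 : (m : ℝ) ≠ 0 := Nat.cast_ne_zero.mpr (by omega)
    have hc' : (c : ℝ) = (-n : ℤ) * m := by
      have hπ2 : (2 * Real.pi) ≠ 0 := by positivity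
      field_simp at hre
      apply mul_left_cancel₀ hπ2
      push_cast
      linear_combination (-(2 * Real.pi)) * hre
    have hcz : (c : ℤ) = (-n) * m := by exact_mod_cast hc'
    have : (m : ℤ) ∣ (c : ℤ) := ⟨-n, by rw [hcz]; ring⟩
    exact_mod_cast this
  · rintro ⟨k, rfl⟩
    rw [pow_mul, zeta_pow_m m hm, one_pow]

lemma pow_mod_eq {m : ℕ} (x : ℂ) (hx : x ^ m = 1) (n : ℕ) : x ^ (n % m) = x ^ n := by
  conv_rhs => rw [← Nat.div_add_mod n m, pow_add, pow_mul, hx, one_pow, one_mul]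

lemma sum_pow (m : ℕ) (hm : 1 ≤ m) (x : ℂ) (hx : x ^ m = 1) :
    ∑ t : Fin m, x ^ (t : ℕ) = if x = 1 then (m : ℂ) else 0 := by
  rw [Fin.sum_univ_eq_sum_range (fun i => x ^ i) m]
  split_ifs with h1
  · simp [h1]
  · rw [geom_sum_eq h1, hx, sub_self, zero_div]

lemma sum_zeta (m : ℕ) (hm : 1 ≤ m) (a : ℕ) :
    ∑ t : Fin m, zeta m ^ (a * (t : ℕ)) = if m ∣ a then (m : ℂ) else 0 := by
  simp_rw [pow_mul]
  rw [sum_pow m hm _ (by rw [← pow_mul, mul_comm, pow_mul, zeta_pow_m m hm, one_pow])]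
  simp [← zeta_pow_eq_one_iff m hm]

lemma zeta_conj (m : ℕ) (hm : 1 ≤ m) : starRingEnd ℂ (zeta m) = zeta m ^ (m - 1) := by
  have h1 : starRingEnd ℂ (zeta m) * zeta m = 1 := by
    rw [zeta, ← Complex.exp_conj, ← Complex.exp_add]
    have : (starRingEnd ℂ) ((-(2 * Real.pi) / m : ℝ) * Complex.I)
        + ((-(2 * Real.pi) / m : ℝ) * Complex.I) = 0 := by
      simp [Complex.conj_I, Complex.conj_ofReal, map_ofNat]
    rw [this, Complex.exp_zero]
  have h2 : zeta m ^ (m - 1) * zeta m = 1 := by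
    rw [← pow_succ, Nat.sub_add_cancel hm, zeta_pow_m m hm]
  rw [eq_inv_of_mul_eq_one_left h1, eq_inv_of_mul_eq_one_left h2]

lemma dvd_iff_eq (m : ℕ) (hm : 1 ≤ m) (u v : Fin m) :
    m ∣ ((u : ℕ) + (m - 1) * (v : ℕ)) ↔ u = v := by
  haveI : NeZero m := ⟨by omega⟩
  rw [← ZMod.natCast_eq_zero_iff]
  push_cast [Nat.cast_sub hm]
  rw [ZMod.natCast_self]
  constructor
  · intro h
    have h2 : (((u : ℕ) : ZMod m)) = ((v : ℕ) : ZMod m) := by linear_combination h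
    have h3 := congrArg ZMod.val h2
    rw [ZMod.val_cast_of_lt u.isLt, ZMod.val_cast_of_lt v.isLt] at h3
    exact Fin.ext h3
  · rintro rfl
    ring

lemma qphi_real_smul (μ : ℍ[ℝ]) (c : ℝ) (x : ℂ) :
    qphi μ ((c : ℂ) * x) = c • qphi μ x := by
  simp only [qphi, Complex.mul_re, Complex.mul_im, Complex.ofReal_re, Complex.ofReal_im,
    qcoe_eq_smul]
  module

lemma qphi_alpha_qphi (μ α : ℍ[ℝ]) (hμ : μ * μ = -1) (hanti : α * μ = -(μ * α)) (z w : ℂ) :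
    qphi μ z * α * qphi μ w = qphi μ (z * starRingEnd ℂ w) * α := by
  have h1 : qphi μ z * α = α * qphi μ (starRingEnd ℂ z) := by
    rw [alpha_qphi μ α hanti, Complex.conj_conj]
  rw [h1, mul_assoc, ← qphi_mul μ hμ, alpha_qphi μ α hanti, RingHom.map_mul,
    Complex.conj_conj]

lemma key_conj (μ α : ℍ[ℝ]) (hμ : μ * μ = -1) (hanti : α * μ = -(μ * α))
    (z w : ℂ) (a b c d : ℝ) :
    qphi μ z * ((a : ℍ[ℝ]) + b • μ + c • α + d • (μ * α)) * qphi μ w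
      = qphi μ (z * (a + b * Complex.I) * w)
        + qphi μ (z * (c + d * Complex.I) * (starRingEnd ℂ w)) * α := by
  have e1 : z * ((a : ℂ) + b * Complex.I) * w
      = z * (a : ℂ) * w + z * (((b : ℂ)) * Complex.I) * w := by ring
  have e2 : z * ((c : ℂ) + d * Complex.I) * starRingEnd ℂ w
      = (c : ℂ) * (z * starRingEnd ℂ w) + (d : ℂ) * ((z * Complex.I) * starRingEnd ℂ w) := by
    ring
  rw [e1, e2, qphi_add, qphi_add, qphi_real_smul, qphi_real_smul]
  have p0 : qphi μ z * (a : ℍ[ℝ]) * qphi μ w = qphi μ (z * (a : ℂ) * w) := by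
    rw [qphi_mul μ hμ, qphi_mul μ hμ, qphi_ofReal]
  have p1 : qphi μ z * (b • μ) * qphi μ w = qphi μ (z * ((b : ℂ) * Complex.I) * w) := by
    rw [qphi_mul μ hμ, qphi_mul μ hμ, qphi_real_smul, qphi_I]
  have p2 : qphi μ z * (c • α) * qphi μ w = c • (qphi μ (z * starRingEnd ℂ w) * α) := by
    rw [mul_smul_comm, smul_mul_assoc, qphi_alpha_qphi μ α hμ hanti]
  have p3 : qphi μ z * (d • (μ * α)) * qphi μ w
      = d • (qphi μ ((z * Complex.I) * starRingEnd ℂ w) * α) := by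
    rw [mul_smul_comm, smul_mul_assoc]
    congr 1
    rw [← mul_assoc, show qphi μ z * μ = qphi μ (z * Complex.I) from by
      rw [qphi_mul μ hμ, qphi_I], qphi_alpha_qphi μ α hμ hanti]
  rw [mul_add, mul_add, mul_add, add_mul, add_mul, add_mul, p0, p1, p2, p3]
  rw [add_mul, smul_mul_assoc, smul_mul_assoc]
  abel

lemma sum_reindex (m : ℕ) (hm : 1 ≤ m) (u : Fin m) (e : ℕ) (f : Fin m → ℂ) :
    ∑ t : Fin m, ∑ s : Fin m, zeta m ^ ((u : ℕ) * (s : ℕ)) * f (s - t) * zeta m ^ (e * (t : ℕ))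
      = (∑ p : Fin m, zeta m ^ ((u : ℕ) * (p : ℕ)) * f p)
        * ∑ t : Fin m, zeta m ^ (((u : ℕ) + e) * (t : ℕ)) := by
  haveI : NeZero m := ⟨by omega⟩
  have hζu : (zeta m ^ (u : ℕ)) ^ m = 1 := by
    rw [← pow_mul, mul_comm, pow_mul, zeta_pow_m m hm, one_pow]
  rw [Finset.mul_sum]
  apply Finset.sum_congr rfl
  intro t _
  rw [← Equiv.sum_comp (Equiv.addRight t)
    (fun s => zeta m ^ ((u : ℕ) * (s : ℕ)) * f (s - t) * zeta m ^ (e * (t : ℕ))),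
    Finset.sum_mul]
  apply Finset.sum_congr rfl
  intro p _
  simp only [Equiv.coe_addRight, add_sub_cancel_right]
  have h1 : zeta m ^ ((u : ℕ) * ((p + t : Fin m) : ℕ))
      = zeta m ^ ((u : ℕ) * (p : ℕ)) * zeta m ^ ((u : ℕ) * (t : ℕ)) := by
    rw [pow_mul, Fin.val_add, pow_mod_eq _ hζu, ← pow_mul, Nat.mul_add, pow_add]
  rw [h1, add_mul, pow_add]
  ring

lemma qphi_mul_mu (μ : ℍ[ℝ]) (hμ : μ * μ = -1) (x : ℂ) :
    qphi μ x * μ = qphi μ (x * Complex.I) := by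
  rw [qphi_mul μ hμ, qphi_I]

lemma qphi_sum (μ : ℍ[ℝ]) {ι : Type*} (s : Finset ι) (f : ι → ℂ) :
    qphi μ (∑ i ∈ s, f i) = ∑ i ∈ s, qphi μ (f i) :=
  map_sum (AddMonoidHom.mk' (qphi μ) (qphi_add μ)) f s

/-- for a quaternion tensor with frontal slices
`T_t = T⁽⁰⁾_t + T⁽¹⁾_t μ + T⁽²⁾_t α + T⁽³⁾_t β` in a three-axis system `(μ, α, β)`,
`(F_μ ⊗ I)·bcirc(T)·(F_μᴴ ⊗ I) = Bdiag(D⁽⁰⁾) + Bdiag(D⁽¹⁾)μ + Bdiag(D⁽²⁾)Zα + Bdiag(D⁽³⁾)Zβ`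
where `Z = A ⊗ I` with `A` the flip permutation matrix. -/
theorem qdft_block_structure_quaternion_bcirc (m n₁ n₂ : ℕ) (hm : 1 ≤ m)
    (μ α β : ℍ[ℝ]) (h : ThreeAxis μ α β)
    (T0 T1 T2 T3 : Fin m → Matrix (Fin n₁) (Fin n₂) ℝ)
    (T : Fin m → Matrix (Fin n₁) (Fin n₂) ℍ[ℝ])
    (hT : ∀ t, T t = Matrix.of fun i j =>
      ((T0 t i j : ℝ) : ℍ[ℝ]) + (T1 t i j) • μ + (T2 t i j) • α + (T3 t i j) • β)
    (Z : Matrix (Fin m × Fin n₂) (Fin m × Fin n₂) ℍ[ℝ])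
    (hZ : Z = flipMat m ⊗ₖ (1 : Matrix (Fin n₂) (Fin n₂) ℍ[ℝ])) :
    (qdft m μ ⊗ₖ (1 : Matrix (Fin n₁) (Fin n₁) ℍ[ℝ]))
        * bcirc T
        * ((qdft m μ)ᴴ ⊗ₖ (1 : Matrix (Fin n₂) (Fin n₂) ℍ[ℝ])) =
      bdiagD μ T0 + mulRight (bdiagD μ T1) μ
        + mulRight (bdiagD μ T2 * Z) α + mulRight (bdiagD μ T3 * Z) β := by
  obtain ⟨hμre, hμn, hαre, hαn, horth, hβ⟩ := h
  have hμ2 : μ * μ = -1 := mu_sq μ hμre hμn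
  have hanti : α * μ = -(μ * α) := anti_comm μ α hμre hαre horth
  have hω : qomega m μ = qphi μ (zeta m) := qomega_eq m μ hμ2
  refine Matrix.ext fun p q => ?_
  obtain ⟨u, i⟩ := p
  obtain ⟨v, j⟩ := q
  simp only [Matrix.mul_apply, Matrix.kroneckerMap_apply, Matrix.one_apply, bcirc,
    Matrix.of_apply, Matrix.conjTranspose_apply, Fintype.sum_prod_type, qdft, hT, hZ,
    mulRight, bdiagD, flipMat, Matrix.add_apply, mul_ite, ite_mul, mul_zero, zero_mul,
    mul_one, one_mul, Finset.sum_ite_eq, Finset.sum_ite_eq', Finset.mem_univ, if_true]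
  -- complex slice data
  set ζ := zeta m with hζdef
  set g0 : Fin m → ℂ := fun p => ((T0 p i j : ℝ) : ℂ) + ((T1 p i j : ℝ) : ℂ) * Complex.I
    with hg0
  set g2 : Fin m → ℂ := fun p => ((T2 p i j : ℝ) : ℂ) + ((T3 p i j : ℝ) : ℂ) * Complex.I
    with hg2
  have hm0 : (m : ℝ) ≠ 0 := Nat.cast_ne_zero.mpr (by omega)
  -- star of DFT entries
  have hstar : ∀ t : Fin m, star (((Real.sqrt m)⁻¹ : ℝ) • qomega m μ ^ ((v : ℕ) * (t : ℕ)))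
      = ((Real.sqrt m)⁻¹ : ℝ) • qphi μ (starRingEnd ℂ (ζ ^ ((v : ℕ) * (t : ℕ)))) := by
    intro t
    rw [Quaternion.star_smul, hω, ← qphi_pow μ hμ2, qphi_star μ hμre]
  -- conjugate power rewrite
  have hconjpow : ∀ t : Fin m, starRingEnd ℂ (ζ ^ ((v : ℕ) * (t : ℕ)))
      = ζ ^ (((m - 1) * (v : ℕ)) * (t : ℕ)) := by
    intro t
    rw [map_pow, zeta_conj m hm, ← pow_mul, mul_assoc]
  have hterm : ∀ t s : Fin m,
      ((Real.sqrt m)⁻¹ : ℝ) • qomega m μ ^ ((u : ℕ) * (s : ℕ))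
          * (((T0 (s - t) i j : ℝ) : ℍ[ℝ]) + T1 (s - t) i j • μ
              + T2 (s - t) i j • α + T3 (s - t) i j • β)
          * star (((Real.sqrt m)⁻¹ : ℝ) • qomega m μ ^ ((v : ℕ) * (t : ℕ)))
      = (m : ℝ)⁻¹ • (qphi μ (ζ ^ ((u : ℕ) * (s : ℕ)) * g0 (s - t)
              * ζ ^ (((m - 1) * (v : ℕ)) * (t : ℕ)))
          + qphi μ (ζ ^ ((u : ℕ) * (s : ℕ)) * g2 (s - t) * ζ ^ ((v : ℕ) * (t : ℕ))) * α) := by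
    intro t s
    rw [hstar t, hω, ← qphi_pow μ hμ2, hβ]
    rw [smul_mul_assoc, smul_mul_assoc, mul_smul_comm, smul_smul]
    rw [key_conj μ α hμ2 hanti]
    have hsq : (Real.sqrt m)⁻¹ * (Real.sqrt m)⁻¹ = (m : ℝ)⁻¹ := by
      rw [← mul_inv, Real.mul_self_sqrt (Nat.cast_nonneg m)]
    rw [hsq, Complex.conj_conj, hconjpow t, hg0, hg2]
  -- evaluate the double complex sums
  have hX : ∑ t : Fin m, ∑ s : Fin m, ζ ^ ((u : ℕ) * (s : ℕ)) * g0 (s - t)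
        * ζ ^ (((m - 1) * (v : ℕ)) * (t : ℕ))
      = (∑ p : Fin m, ζ ^ ((u : ℕ) * (p : ℕ)) * g0 p) * (if u = v then (m : ℂ) else 0) := by
    rw [sum_reindex m hm u ((m - 1) * (v : ℕ)) g0]
    congr 1
    rw [sum_zeta m hm ((u : ℕ) + (m - 1) * (v : ℕ))]
    simp [dvd_iff_eq m hm u v]
  have hY : ∑ t : Fin m, ∑ s : Fin m, ζ ^ ((u : ℕ) * (s : ℕ)) * g2 (s - t)
        * ζ ^ ((v : ℕ) * (t : ℕ))
      = (∑ p : Fin m, ζ ^ ((u : ℕ) * (p : ℕ)) * g2 p)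
        * (if ((u : ℕ) + (v : ℕ)) % m = 0 then (m : ℂ) else 0) := by
    rw [sum_reindex m hm u ((v : ℕ)) g2]
    congr 1
    rw [sum_zeta m hm ((u : ℕ) + (v : ℕ))]
    rw [if_congr (Nat.dvd_iff_mod_eq_zero) rfl rfl]
  -- LHS to canonical form
  have hL : ∑ t : Fin m, (∑ s : Fin m,
        ((Real.sqrt m)⁻¹ : ℝ) • qomega m μ ^ ((u : ℕ) * (s : ℕ))
          * (((T0 (s - t) i j : ℝ) : ℍ[ℝ]) + T1 (s - t) i j • μ
              + T2 (s - t) i j • α + T3 (s - t) i j • β))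
        * star (((Real.sqrt m)⁻¹ : ℝ) • qomega m μ ^ ((v : ℕ) * (t : ℕ)))
      = (m : ℝ)⁻¹ • (qphi μ ((∑ p : Fin m, ζ ^ ((u : ℕ) * (p : ℕ)) * g0 p)
              * (if u = v then (m : ℂ) else 0))
          + qphi μ ((∑ p : Fin m, ζ ^ ((u : ℕ) * (p : ℕ)) * g2 p)
              * (if ((u : ℕ) + (v : ℕ)) % m = 0 then (m : ℂ) else 0)) * α) := by
    simp only [Finset.sum_mul]
    rw [Finset.sum_congr rfl fun t _ => Finset.sum_congr rfl fun s _ => hterm t s]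
    simp only [← Finset.smul_sum]
    congr 1
    simp only [Finset.sum_add_distrib, ← Finset.sum_mul, ← qphi_sum]
    rw [← hX, ← hY]
    simp only [Finset.sum_mul]
  have hfin : ∀ (S : ℂ) (c : Prop) (inst : Decidable c),
      (m : ℝ)⁻¹ • qphi μ (S * (if c then (m : ℂ) else 0)) = qphi μ (if c then S else 0) := by
    intro S c inst
    split_ifs with hc
    · rw [← qphi_real_smul]
      congr 1
      have hmC : (m : ℂ) ≠ 0 := Nat.cast_ne_zero.mpr (by omega)
      push_cast
      field_simp
    · simp [qphi_zero]
  have hconv : ∀ (Tl : Fin m → Matrix (Fin n₁) (Fin n₂) ℝ) (c : Prop) (inst : Decidable c),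
      (if c then ∑ x : Fin m, qomega m μ ^ ((u : ℕ) * (x : ℕ)) * ((Tl x i j : ℝ) : ℍ[ℝ]) else 0)
      = qphi μ (if c then ∑ x : Fin m, ζ ^ ((u : ℕ) * (x : ℕ)) * ((Tl x i j : ℝ) : ℂ) else 0) := by
    intro Tl c inst
    split_ifs with hc
    · rw [qphi_sum]
      refine Finset.sum_congr rfl fun x _ => ?_
      rw [qphi_mul μ hμ2, qphi_pow μ hμ2, ← hω, qphi_ofReal]
    · simp [qphi_zero]
  have hcollapse : ∀ (S : ℍ[ℝ]),
      (∑ x : Fin m, if ((x : ℕ) + (v : ℕ)) % m = 0 then (if u = x then S else 0) else 0)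
      = if ((u : ℕ) + (v : ℕ)) % m = 0 then S else 0 := by
    intro S
    have hsw : ∀ x : Fin m, (if ((x : ℕ) + (v : ℕ)) % m = 0 then (if u = x then S else 0) else 0)
        = if u = x then (if ((u : ℕ) + (v : ℕ)) % m = 0 then S else 0) else 0 := by
      intro x
      by_cases hux : u = x
      · subst hux; simp
      · simp [hux]
    rw [Finset.sum_congr rfl fun x _ => hsw x, Finset.sum_ite_eq]
    simp
  rw [hL, smul_add, ← smul_mul_assoc, hfin, hfin, hcollapse, hcollapse, hconv T0, hconv T2,
    hconv T3, show (if u = v then (∑ x : Fin m, qomega m μ ^ ((u : ℕ) * (x : ℕ))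
        * ((T1 x i j : ℝ) : ℍ[ℝ])) * μ else 0)
      = (if u = v then ∑ x : Fin m, qomega m μ ^ ((u : ℕ) * (x : ℕ))
        * ((T1 x i j : ℝ) : ℍ[ℝ]) else 0) * μ from by rw [ite_mul, zero_mul], hconv T1,
    qphi_mul_mu μ hμ2, hβ, ← mul_assoc, qphi_mul_mu μ hμ2]
  have c0 : (if u = v then ∑ p : Fin m, ζ ^ ((u : ℕ) * (p : ℕ)) * g0 p else 0)
      = (if u = v then ∑ x : Fin m, ζ ^ ((u : ℕ) * (x : ℕ)) * ((T0 x i j : ℝ) : ℂ) else 0)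
        + (if u = v then ∑ x : Fin m, ζ ^ ((u : ℕ) * (x : ℕ)) * ((T1 x i j : ℝ) : ℂ) else 0)
          * Complex.I := by
    split_ifs with hc
    · rw [hg0]
      simp only [mul_add, Finset.sum_add_distrib, Finset.sum_mul, mul_assoc]
    · simp
  have c2 : (if ((u : ℕ) + (v : ℕ)) % m = 0
        then ∑ p : Fin m, ζ ^ ((u : ℕ) * (p : ℕ)) * g2 p else 0)
      = (if ((u : ℕ) + (v : ℕ)) % m = 0
          then ∑ x : Fin m, ζ ^ ((u : ℕ) * (x : ℕ)) * ((T2 x i j : ℝ) : ℂ) else 0)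
        + (if ((u : ℕ) + (v : ℕ)) % m = 0
          then ∑ x : Fin m, ζ ^ ((u : ℕ) * (x : ℕ)) * ((T3 x i j : ℝ) : ℂ) else 0)
          * Complex.I := by
    split_ifs with hc
    · rw [hg2]
      simp only [mul_add, Finset.sum_add_distrib, Finset.sum_mul, mul_assoc]
    · simp
  rw [c0, c2, qphi_add, qphi_add, add_mul]
  abel
end
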